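/- Assume m ≤ k. For every integer u with (k+1)/2 ≤ u ≤ m, the number of crossing circuits D ⊆ Ω with |D| = u is at most binom(m, u) · (q+1)^{2u−k−1}. -/

import Mathlib

open scoped Classical
noncomputable section

variable {F : Type} [Field F]

/-- Projective points of `F^k`. -/
abbrev Pt (F : Type) [Field F] (k : ℕ) := Projectivization F (Fin k → F)

/-- Linear span of a set of projective points. -/
def pspan {k : ℕ} (T : Set (Pt F k)) : Submodule F (Fin k → F) :=
  ⨆ x ∈ T, x.submodule

/-- A finite set of projective points is dependent if the dimension of its linear span is
at most its cardinality minus one. -/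
def Dep {k : ℕ} (T : Finset (Pt F k)) : Prop :=
  Module.finrank F (pspan (T : Set (Pt F k))) + 1 ≤ T.card

/-- A circuit is a dependent set that is minimal with respect to inclusion. -/
def IsCircuit {k : ℕ} (T : Finset (Pt F k)) : Prop :=
  Dep T ∧ ∀ T' ⊂ T, ¬ Dep T'

/-- A crossing circuit (for the line configuration `L`): a circuit contained in the union
of the lines which contains at most one point on each line. -/
def CrossingCircuit {k m : ℕ} (L : Fin m → Submodule F (Fin k → F))
    (T : Finset (Pt F k)) : Prop :=
  IsCircuit T ∧ (∀ x ∈ T, ∃ i, x.submodule ≤ L i) ∧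
    ∀ i, (T.filter fun x => x.submodule ≤ L i).card ≤ 1

namespace S12

lemma rep_injective {k : ℕ} :
    Function.Injective (Projectivization.rep : Pt F k → (Fin k → F)) := by
  intro a b h
  rw [← a.mk_rep, ← b.mk_rep]
  exact (Projectivization.mk_eq_mk_iff F _ _ a.rep_nonzero b.rep_nonzero).2 ⟨1, by simp [h]⟩

lemma pspan_eq {k : ℕ} (T : Set (Pt F k)) :
    pspan T = Submodule.span F (Projectivization.rep '' T) := by
  have h : Projectivization.rep '' T = ⋃ x ∈ T, {Projectivization.rep x} := by
    ext v; simp [eq_comm]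
  rw [h, Submodule.span_iUnion₂]
  simp only [pspan, Projectivization.submodule_eq]


lemma dep_of_relation {k : ℕ} (s : Finset (Pt F k)) (c : Pt F k → F)
    (hsum : ∑ x ∈ s, c x • x.rep = 0) {y : Pt F k} (hy : y ∈ s) (hcy : c y ≠ 0) :
    Dep s := by
  have hsum' : c y • y.rep + ∑ x ∈ s.erase y, c x • x.rep = 0 := by
    exact (Finset.add_sum_erase _ _ hy).trans hsum
  have hyel : y.rep ∈ Submodule.span F
      (Projectivization.rep '' ((s.erase y : Finset (Pt F k)) : Set (Pt F k))) := by
    have h1 : y.rep = (c y)⁻¹ • (-(∑ x ∈ s.erase y, c x • x.rep)) := by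
      rw [eq_inv_smul_iff₀ hcy]
      exact eq_neg_of_add_eq_zero_left hsum'
    rw [h1]
    refine Submodule.smul_mem _ _ (Submodule.neg_mem _ (Submodule.sum_mem _ ?_))
    intro x hx
    exact Submodule.smul_mem _ _
      (Submodule.subset_span ⟨x, by simpa using (by simpa using hx : ¬x = y ∧ x ∈ s).symm, rfl⟩)
  have hle : pspan (s : Set (Pt F k)) ≤ Submodule.span F
      (Projectivization.rep '' ((s.erase y : Finset (Pt F k)) : Set (Pt F k))) := by
    rw [pspan_eq]
    refine Submodule.span_le.2 ?_
    rintro _ ⟨x, hx, rfl⟩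
    by_cases hxy : x = y
    · subst hxy; exact hyel
    · exact Submodule.subset_span ⟨x, by simp [Finset.mem_erase, hxy, hx], rfl⟩
  have h2 : Module.finrank F (pspan (s : Set (Pt F k))) ≤ (s.erase y).card := by
    have e1 : Projectivization.rep '' ((s.erase y : Finset (Pt F k)) : Set (Pt F k))
        = (((s.erase y).image Projectivization.rep : Finset (Fin k → F)) : Set (Fin k → F)) := by
      simp [Finset.coe_image]
    calc Module.finrank F (pspan (s : Set (Pt F k)))
        ≤ Module.finrank F (Submodule.span F
            (Projectivization.rep '' ((s.erase y : Finset (Pt F k)) : Set (Pt F k)))) :=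
          Submodule.finrank_mono hle
      _ ≤ ((s.erase y).image Projectivization.rep).card := by
          rw [e1]; exact finrank_span_finset_le_card _
      _ ≤ (s.erase y).card := Finset.card_image_le
  have h3 : (s.erase y).card + 1 = s.card := Finset.card_erase_add_one hy
  unfold Dep
  omega


lemma exists_relation_of_dep {k : ℕ} {T : Finset (Pt F k)} (h : Dep T) :
    ∃ c : Pt F k → F, (∃ x ∈ T, c x ≠ 0) ∧ (∀ x, x ∉ T → c x = 0) ∧
      ∑ x ∈ T, c x • x.rep = 0 := by
  have hnl : ¬ LinearIndependent F (fun x : {x // x ∈ T} => (x : Pt F k).rep) := by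
    intro hli
    have hr : Set.range (fun x : {x // x ∈ T} => (x : Pt F k).rep)
        = Projectivization.rep '' (T : Set (Pt F k)) := by
      ext v; constructor
      · rintro ⟨x, rfl⟩; exact ⟨x, x.2, rfl⟩
      · rintro ⟨x, hx, rfl⟩; exact ⟨⟨x, hx⟩, rfl⟩
    have := finrank_span_eq_card hli
    rw [hr, Fintype.card_coe] at this
    rw [Dep, pspan_eq, this] at h
    omega
  obtain ⟨g, hg0, i0, hi0⟩ := Fintype.not_linearIndependent_iff.1 hnl
  refine ⟨fun x => if h : x ∈ T then g ⟨x, h⟩ else 0, ⟨i0, i0.2, by simp [hi0]⟩,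
    fun x hx => by simp [hx], ?_⟩
  rw [← Finset.sum_coe_sort T]
  
  simpa using hg0

lemma circuit_relation {k : ℕ} {T : Finset (Pt F k)} (h : IsCircuit T) :
    ∃ c : Pt F k → F, (∀ x ∈ T, c x ≠ 0) ∧ ∑ x ∈ T, c x • x.rep = 0 := by
  obtain ⟨c, ⟨x1, hx1, hc1⟩, hout, hsum⟩ := exists_relation_of_dep h.1
  refine ⟨c, fun x0 hx0 => ?_, hsum⟩
  by_contra hc0
  have hsub : T.erase x0 ⊂ T := Finset.erase_ssubset hx0
  refine h.2 _ hsub (dep_of_relation _ c ?_ (Finset.mem_erase.2 ⟨?_, hx1⟩) hc1)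
  · rw [Finset.sum_erase _ (by rw [hc0]; exact zero_smul _ _)]
    exact hsum
  · rintro rfl; exact hc1 hc0


lemma pow_ineq {q : ℕ} (hq : 2 ≤ q) : ∀ e : ℕ, q ^ (e + 1) - 1 ≤ (q - 1) * (q + 1) ^ e := by
  intro e
  induction e with
  | zero => simp
  | succ n ih =>
    have h1 : 1 ≤ q ^ (n + 1) := Nat.one_le_pow _ _ (by omega)
    have h2 : q ^ (n + 1 + 1) = q * q ^ (n + 1) := by ring
    have h3 : q * (q ^ (n + 1) - 1) = q * q ^ (n + 1) - q * 1 := Nat.mul_sub _ _ _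
    have h4 : q * (q ^ (n + 1) - 1) ≤ q * ((q - 1) * (q + 1) ^ n) :=
      Nat.mul_le_mul_left _ ih
    have h5 : (q + 1) ^ (n + 1) = q * (q + 1) ^ n + (q + 1) ^ n := by ring
    have h6 : 1 ≤ (q + 1) ^ n := Nat.one_le_pow _ _ (by omega)
    have h7 : q * ((q - 1) * (q + 1) ^ n) = (q - 1) * (q * (q + 1) ^ n) := by ring
    have h8 : (q - 1) * (q * (q + 1) ^ n) + (q - 1) * 1 ≤ (q - 1) * (q + 1) ^ (n + 1) := by
      rw [← Nat.mul_add]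
      exact Nat.mul_le_mul_left _ (by omega)
    omega


lemma perS {m k u : ℕ} [Fintype F] (hk2 : 2 ≤ k) (hk2u : k ≤ 2 * u) (hu : 1 ≤ u)
    (P Q : Fin m → (Fin k → F))
    (hgen : ∀ T : Finset (Fin m ⊕ Fin m), T.card ≤ k →
      LinearIndependent F (fun t : {x // x ∈ T} => Sum.elim P Q (t : Fin m ⊕ Fin m)))
    (L : Fin m → Submodule F (Fin k → F))
    (hL : ∀ i, L i = Submodule.span F {P i, Q i})
    (S : Finset (Fin m)) (hS : S.card = u)
    (𝒞 : Finset (Finset (Pt F k)))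
    (h𝒞 : ∀ D ∈ 𝒞, IsCircuit D ∧ D.card = u ∧
      (∀ i, (D.filter fun x => x.submodule ≤ L i).card ≤ 1) ∧
      ∀ x ∈ D, ∃ i ∈ S, x.submodule ≤ L i) :
    𝒞.card * (Fintype.card F - 1) ≤ Fintype.card F ^ (2 * u - k) - 1 := by
  classical
  set q := Fintype.card F with hqdef
  -- the ambient coefficient space and the linear map
  let ι := ({x // x ∈ S} ⊕ {x // x ∈ S})
  let V : ι → (Fin k → F) := Sum.elim (fun i => P i) (fun i => Q i)
  let M : (ι → F) →ₗ[F] (Fin k → F) := Fintype.linearCombination F V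
  have hMapp : ∀ w : ι → F, M w = ∑ j, w j • V j := fun w => rfl
  have hcardι : Fintype.card ι = 2 * u := by
    simp only [ι, Fintype.card_sum, Fintype.card_coe, hS]; ring
  -- pairwise independence: no combination of P i and Q i vanishes
  have hPQ : ∀ (i : Fin m) (α β : F), ¬(α = 0 ∧ β = 0) → α • P i + β • Q i ≠ 0 := by
    intro i α β hab h0
    set T : Finset (Fin m ⊕ Fin m) := {Sum.inl i, Sum.inr i} with hT
    have hTc : T.card ≤ k := le_trans (Finset.card_insert_le _ _) (by simp; omega)
    have hli := Fintype.linearIndependent_iff.1 (hgen T hTc)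
    set G : (Fin m ⊕ Fin m) → (Fin k → F) :=
      fun j => (if j = Sum.inl i then α else β) • Sum.elim P Q j with hG
    have hsum : ∑ t : {x // x ∈ T}, (if (t : Fin m ⊕ Fin m) = Sum.inl i then α else β)
        • Sum.elim P Q (t : Fin m ⊕ Fin m) = 0 := by
      have := Finset.sum_coe_sort T G
      rw [hT] at this
      rw [show (∑ t : {x // x ∈ T}, (if (t : Fin m ⊕ Fin m) = Sum.inl i then α else β)
        • Sum.elim P Q (t : Fin m ⊕ Fin m)) = ∑ t : {x // x ∈ T}, G t from rfl, this,
        Finset.sum_pair (by simp : (Sum.inl i : Fin m ⊕ Fin m) ≠ Sum.inr i)]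
      simp only [hG, if_pos rfl, if_neg (by simp : (Sum.inr i : Fin m ⊕ Fin m) ≠ Sum.inl i)]
      simpa using h0
    have h1 := hli _ hsum ⟨Sum.inl i, by simp [hT]⟩
    have h2 := hli _ hsum ⟨Sum.inr i, by simp [hT]⟩
    simp at h1 h2
    exact hab ⟨h1, h2⟩
  -- the range of M is everything
  have hrange : LinearMap.range M = ⊤ := by
    obtain ⟨g⟩ : Nonempty (Fin k ↪ ι) :=
      Function.Embedding.nonempty_of_card_le (by rw [hcardι, Fintype.card_fin]; omega)
    have hmapinj : Function.Injective
        (Sum.map (Subtype.val : {x // x ∈ S} → Fin m) (Subtype.val : {x // x ∈ S} → Fin m)) := by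
      intro a b hab
      cases a with
      | inl x => cases b with
        | inl y => simp only [Sum.map_inl, Sum.inl.injEq] at hab; exact congrArg _ (Subtype.ext hab)
        | inr y => simp at hab
      | inr x => cases b with
        | inl y => simp at hab
        | inr y => simp only [Sum.map_inr, Sum.inr.injEq] at hab; exact congrArg _ (Subtype.ext hab)
    have hinj : Function.Injective (fun j : Fin k => (Sum.map Subtype.val Subtype.val (g j) : Fin m ⊕ Fin m)) :=
      hmapinj.comp g.injective
    set T : Finset (Fin m ⊕ Fin m) :=
      Finset.image (fun j : Fin k => (Sum.map Subtype.val Subtype.val (g j))) Finset.univ with hT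
    have hTc : T.card = k := by
      rw [hT, Finset.card_image_of_injective _ hinj, Finset.card_univ, Fintype.card_fin]
    have hli0 := hgen T (le_of_eq hTc)
    let h' : Fin k → {x // x ∈ T} := fun j =>
      ⟨_, Finset.mem_image_of_mem _ (Finset.mem_univ j)⟩
    have h'inj : Function.Injective h' := by
      intro a b hab
      exact hinj (congrArg Subtype.val hab)
    have hcomp : (fun t : {x // x ∈ T} => Sum.elim P Q (t : Fin m ⊕ Fin m)) ∘ h' = V ∘ g := by
      funext j
      simp only [Function.comp_apply, h']
      cases hgj : g j with
      | inl x => simp [V]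
      | inr x => simp [V]
    have hli : LinearIndependent F (V ∘ g) := hcomp ▸ hli0.comp h' h'inj
    have hfr1 : Module.finrank F (Submodule.span F (Set.range (V ∘ g))) = k := by
      rw [finrank_span_eq_card hli, Fintype.card_fin]
    have hle : Submodule.span F (Set.range (V ∘ g)) ≤ Submodule.span F (Set.range V) :=
      Submodule.span_mono (Set.range_comp_subset_range _ _)
    have hfr2 : Module.finrank F (Submodule.span F (Set.range V)) = k := by
      refine le_antisymm ?_ ?_
      · exact le_trans (Submodule.finrank_le _) (by rw [Module.finrank_fin_fun])
      · exact le_trans (le_of_eq hfr1.symm) (Submodule.finrank_mono hle)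
    have : Submodule.span F (Set.range V) = ⊤ :=
      Submodule.eq_top_of_finrank_eq (by rw [hfr2, Module.finrank_fin_fun])
    rw [show LinearMap.range M = Submodule.span F (Set.range V) from
      Fintype.range_linearCombination F V, this]
  -- the kernel has dimension 2u - k
  have hker : Module.finrank F (LinearMap.ker M) = 2 * u - k := by
    have h1 := LinearMap.finrank_range_add_finrank_ker M
    rw [hrange, finrank_top, Module.finrank_fin_fun, Module.finrank_pi, hcardι] at h1
    omega
  -- the combination associated to a coefficient vector on line i
  let Cmb : (ι → F) → {x // x ∈ S} → (Fin k → F) :=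
    fun w i => w (Sum.inl i) • P i + w (Sum.inr i) • Q i
  let Good : Finset (Pt F k) → (ι → F) → Prop := fun D w =>
    M w = 0 ∧ (∀ i : {x // x ∈ S}, ¬(w (Sum.inl i) = 0 ∧ w (Sum.inr i) = 0)) ∧
      ∀ x ∈ D, ∃ i : {x // x ∈ S}, ∃ h : Cmb w i ≠ 0, x = Projectivization.mk F (Cmb w i) h
  have claim1 : ∀ D ∈ 𝒞, ∃ w : ι → F, Good D w := by
    intro D hD
    obtain ⟨hcirc, hcard, hfil, hline⟩ := h𝒞 D hD
    obtain ⟨c, hc0, hcsum⟩ := circuit_relation hcirc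
    have hψex : ∀ x : {x // x ∈ D}, ∃ i : {x // x ∈ S}, (x : Pt F k).submodule ≤ L i := by
      intro x
      obtain ⟨i, hiS, hle⟩ := hline x x.2
      exact ⟨⟨i, hiS⟩, hle⟩
    choose ψ hψle using hψex
    have hψinj : Function.Injective ψ := by
      intro x y hxy
      have h1 : (x : Pt F k) ∈ D.filter (fun z => z.submodule ≤ L (ψ x)) :=
        Finset.mem_filter.2 ⟨x.2, hψle x⟩
      have h2 : (y : Pt F k) ∈ D.filter (fun z => z.submodule ≤ L (ψ x)) :=
        Finset.mem_filter.2 ⟨y.2, by rw [hxy]; exact hψle y⟩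
      exact Subtype.ext (Finset.card_le_one.1 (hfil (ψ x)) _ h1 _ h2)
    have hψbij : Function.Bijective ψ :=
      (Fintype.bijective_iff_injective_and_card ψ).2
        ⟨hψinj, by simp only [Fintype.card_coe, hcard, hS]⟩
    let e := Equiv.ofBijective ψ hψbij
    have hrepmem : ∀ i : {x // x ∈ S},
        ((e.symm i : {x // x ∈ D}) : Pt F k).rep ∈ Submodule.span F {P i, Q i} := by
      intro i
      have h1 : ((e.symm i : {x // x ∈ D}) : Pt F k).submodule ≤ L (ψ (e.symm i)) := hψle _
      have h2 : ψ (e.symm i) = i := e.apply_symm_apply i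
      rw [h2] at h1
      rw [← hL]
      exact h1 (by rw [Projectivization.submodule_eq]; exact Submodule.mem_span_singleton_self _)
    have habex : ∀ i : {x // x ∈ S}, ∃ a' b' : F,
        a' • P i + b' • Q i = ((e.symm i : {x // x ∈ D}) : Pt F k).rep :=
      fun i => Submodule.mem_span_pair.1 (hrepmem i)
    choose a b hab using habex
    set w : ι → F := Sum.elim (fun i => c ((e.symm i : {x // x ∈ D}) : Pt F k) * a i)
      (fun i => c ((e.symm i : {x // x ∈ D}) : Pt F k) * b i) with hw
    have hCmb : ∀ i : {x // x ∈ S}, Cmb w i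
        = c ((e.symm i : {x // x ∈ D}) : Pt F k) • ((e.symm i : {x // x ∈ D}) : Pt F k).rep := by
      intro i
      show w (Sum.inl i) • P i + w (Sum.inr i) • Q i = _
      rw [hw]
      simp only [Sum.elim_inl, Sum.elim_inr]
      rw [mul_smul, mul_smul, ← smul_add, hab i]
    refine ⟨w, ?_, ?_, ?_⟩
    · rw [hMapp, Fintype.sum_sum_type]
      have hV1 : ∀ i : {x // x ∈ S}, w (Sum.inl i) • V (Sum.inl i) = w (Sum.inl i) • P i :=
        fun i => rfl
      have hV2 : ∀ i : {x // x ∈ S}, w (Sum.inr i) • V (Sum.inr i) = w (Sum.inr i) • Q i :=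
        fun i => rfl
      simp only [hV1, hV2]
      rw [← Finset.sum_add_distrib]
      have : ∀ i : {x // x ∈ S}, w (Sum.inl i) • P i + w (Sum.inr i) • Q i
          = c ((e.symm i : {x // x ∈ D}) : Pt F k) • ((e.symm i : {x // x ∈ D}) : Pt F k).rep :=
        fun i => hCmb i
      rw [Finset.sum_congr rfl (fun i _ => this i)]
      have h4 := Equiv.sum_comp e.symm (fun x : {x // x ∈ D} => c (x : Pt F k) • (x : Pt F k).rep)
      rw [h4, Finset.sum_coe_sort D (fun x => c x • x.rep)]
      exact hcsum
    · rintro i ⟨h1, h2⟩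
      rw [hw] at h1 h2
      simp only [Sum.elim_inl, Sum.elim_inr, mul_eq_zero] at h1 h2
      have hcne : c ((e.symm i : {x // x ∈ D}) : Pt F k) ≠ 0 := hc0 _ (e.symm i).2
      have ha0 : a i = 0 := h1.resolve_left hcne
      have hb0 : b i = 0 := h2.resolve_left hcne
      have := hab i
      rw [ha0, hb0, zero_smul, zero_smul, add_zero] at this
      exact ((e.symm i : {x // x ∈ D}) : Pt F k).rep_nonzero this.symm
    · intro x hx
      refine ⟨e ⟨x, hx⟩, ?_⟩
      have hsymm : e.symm (e ⟨x, hx⟩) = ⟨x, hx⟩ := e.symm_apply_apply _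
      have hC : Cmb w (e ⟨x, hx⟩) = c x • x.rep := by rw [hCmb, hsymm]
      have hne : Cmb w (e ⟨x, hx⟩) ≠ 0 := by
        rw [hC]; exact smul_ne_zero (hc0 x hx) x.rep_nonzero
      refine ⟨hne, ?_⟩
      have hmk : Projectivization.mk F (Cmb w (e ⟨x, hx⟩)) hne = x := by
        conv_rhs => rw [← x.mk_rep]
        apply (Projectivization.mk_eq_mk_iff F _ _ hne x.rep_nonzero).2
        refine ⟨Units.mk0 (c x) (hc0 x hx), ?_⟩
        rw [Units.smul_def, Units.val_mk0, hC]
      exact hmk.symm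
  have claim2 : ∀ (D : Finset (Pt F k)) (w : ι → F) (t : Fˣ), Good D w → Good D ((t : F) • w) := by
    rintro D w t ⟨hw1, hw2, hw3⟩
    have hCs : ∀ i : {x // x ∈ S}, Cmb ((t : F) • w) i = (t : F) • Cmb w i := by
      intro i
      show ((t : F) • w) (Sum.inl i) • P i + ((t : F) • w) (Sum.inr i) • Q i = _
      simp only [Pi.smul_apply, smul_eq_mul]
      rw [mul_smul, mul_smul, ← smul_add]
    refine ⟨?_, ?_, ?_⟩
    · rw [map_smul, hw1, smul_zero]
    · rintro i ⟨h1, h2⟩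
      have h1' : (t : F) * w (Sum.inl i) = 0 := h1
      have h2' : (t : F) * w (Sum.inr i) = 0 := h2
      exact hw2 i ⟨(mul_eq_zero.1 h1').resolve_left t.ne_zero,
        (mul_eq_zero.1 h2').resolve_left t.ne_zero⟩
    · intro x hx
      obtain ⟨i, h, hxi⟩ := hw3 x hx
      have hne : Cmb ((t : F) • w) i ≠ 0 := by
        rw [hCs]; exact smul_ne_zero t.ne_zero h
      refine ⟨i, hne, ?_⟩
      rw [hxi]
      apply (Projectivization.mk_eq_mk_iff F _ _ h hne).2
      refine ⟨t⁻¹, ?_⟩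
      rw [Units.smul_def, hCs, smul_smul]
      simp
  have claim3 : ∀ D ∈ 𝒞, ∀ D' ∈ 𝒞, ∀ w : ι → F, Good D w → Good D' w → D = D' := by
    intro D hD D' hD' w hw hw'
    have hRn : ∀ i : {x // x ∈ S}, Cmb w i ≠ 0 := fun i => hPQ i _ _ (hw.2.1 i)
    set R : Finset (Pt F k) :=
      Finset.image (fun i : {x // x ∈ S} => Projectivization.mk F (Cmb w i) (hRn i))
        Finset.univ with hR
    have hsub : ∀ E : Finset (Pt F k), (∀ x ∈ E, ∃ i : {x // x ∈ S},
        ∃ h : Cmb w i ≠ 0, x = Projectivization.mk F (Cmb w i) h) → E ⊆ R := by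
      intro E hE x hx
      obtain ⟨i, h, hxi⟩ := hE x hx
      rw [hR, Finset.mem_image]
      exact ⟨i, Finset.mem_univ i, hxi.symm⟩
    have hRcard : R.card ≤ u := by
      calc R.card ≤ (Finset.univ : Finset {x // x ∈ S}).card := Finset.card_image_le
        _ = u := by simp only [Finset.card_univ, Fintype.card_coe, hS]
    have hDcard := (h𝒞 D hD).2.1
    have hD'card := (h𝒞 D' hD').2.1
    have h1 : D = R := Finset.eq_of_subset_of_card_le (hsub D hw.2.2) (by omega)
    have h2 : D' = R := Finset.eq_of_subset_of_card_le (hsub D' hw'.2.2) (by omega)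
    rw [h1, h2]
  -- the injection and counting
  choose wfn hwfn using claim1
  have hupos : 0 < S.card := by omega
  obtain ⟨i0v, hi0v⟩ := Finset.card_pos.1 hupos
  have i0 : {x // x ∈ S} := ⟨i0v, hi0v⟩
  set 𝒲 : Set (ι → F) := {w | M w = 0 ∧ w ≠ 0} with h𝒲def
  have hgood_ne : ∀ (D : Finset (Pt F k)) (w : ι → F), Good D w → w ≠ 0 := by
    intro D w hw h0
    exact hw.2.1 i0 ⟨by rw [h0]; rfl, by rw [h0]; rfl⟩
  let Ψ : {D // D ∈ 𝒞} × Fˣ → 𝒲 := fun p =>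
    ⟨(p.2 : F) • wfn p.1 p.1.2,
      (claim2 _ _ p.2 (hwfn p.1 p.1.2)).1,
      hgood_ne _ _ (claim2 _ _ p.2 (hwfn p.1 p.1.2))⟩
  have hΨinj : Function.Injective Ψ := by
    rintro ⟨⟨D, hD⟩, t⟩ ⟨⟨D', hD'⟩, t'⟩ hpp
    have hval : (t : F) • wfn D hD = (t' : F) • wfn D' hD' := congrArg Subtype.val hpp
    have hgood1 : Good D ((t : F) • wfn D hD) := claim2 _ _ t (hwfn D hD)
    have hgood2 : Good D' ((t : F) • wfn D hD) := by
      rw [hval]; exact claim2 _ _ t' (hwfn D' hD')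
    have hDD : D = D' := claim3 _ hD _ hD' _ hgood1 hgood2
    subst hDD
    have hwne : wfn D hD ≠ 0 := hgood_ne _ _ (hwfn D hD)
    obtain ⟨j, hj⟩ := Function.ne_iff.1 hwne
    have hval' : (t : F) * wfn D hD j = (t' : F) * wfn D hD j := by
      have := congrFun hval j
      simpa using this
    have htt : (t : F) = (t' : F) := mul_right_cancel₀ hj hval'
    have : t = t' := Units.ext htt
    rw [this]
  haveI : Fintype (LinearMap.ker M) := Fintype.ofFinite _
  have hWcard : Nat.card 𝒲 = q ^ (2 * u - k) - 1 := by
    have hWeq : 𝒲 = ((LinearMap.ker M : Submodule F (ι → F)) : Set (ι → F)) \ {0} := by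
      ext w0
      simp only [h𝒲def, Set.mem_setOf_eq, Set.mem_diff, SetLike.mem_coe, LinearMap.mem_ker,
        Set.mem_singleton_iff]
    rw [Nat.card_coe_set_eq, hWeq,
      Set.ncard_diff_singleton_of_mem (by simp), ← Nat.card_coe_set_eq,
      SetLike.coe_sort_coe, Nat.card_eq_fintype_card, Module.card_eq_pow_finrank (K := F), hker]
  have hmain : Nat.card ({D // D ∈ 𝒞} × Fˣ) ≤ Nat.card 𝒲 :=
    Nat.card_le_card_of_injective Ψ hΨinj
  rw [Nat.card_prod, Nat.card_eq_fintype_card (α := {D // D ∈ 𝒞}), Fintype.card_coe,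
    Nat.card_units, Nat.card_eq_fintype_card (α := F), hWcard] at hmain
  exact hmain

end S12

/-- assuming `m ≤ k`, for every `u` with `(k+1)/2 ≤ u ≤ m`, the number of
crossing circuits of size `u` is at most `binom(m,u) · (q+1)^(2u-k-1)`. -/
theorem statement12 [Fintype F] {m k : ℕ} (hm : 2 ≤ m) (hk4 : 4 ≤ k) (hkm : k + 1 ≤ 2 * m)
    (hmk : m ≤ k)
    (P Q : Fin m → (Fin k → F))
    (hgen : ∀ T : Finset (Fin m ⊕ Fin m), T.card ≤ k →
      LinearIndependent F (fun t : {x // x ∈ T} => Sum.elim P Q (t : Fin m ⊕ Fin m)))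
    (L : Fin m → Submodule F (Fin k → F))
    (hL : ∀ i, L i = Submodule.span F {P i, Q i})
    (u : ℕ) (hu1 : k + 1 ≤ 2 * u) (hu2 : u ≤ m) :
    {D : Finset (Pt F k) | CrossingCircuit L D ∧ D.card = u}.ncard
      ≤ m.choose u * (Fintype.card F + 1) ^ (2 * u - k - 1) := by
  classical
  haveI hfinpt : Finite (Pt F k) := Quotient.finite _
  haveI : Fintype (Pt F k) := Fintype.ofFinite _
  set q := Fintype.card F with hqdef
  have hq2 : 2 ≤ q := Fintype.one_lt_card
  have hu0 : 1 ≤ u := by omega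
  -- a choice of line through each point
  have hm0 : (0 : ℕ) < m := by omega
  let φ : Pt F k → Fin m := fun x =>
    if h : ∃ i, x.submodule ≤ L i then h.choose else ⟨0, hm0⟩
  have hφ : ∀ x : Pt F k, (∃ i, x.submodule ≤ L i) → x.submodule ≤ L (φ x) := by
    intro x h
    simp only [φ, dif_pos h]
    exact h.choose_spec
  set CircF : Finset (Finset (Pt F k)) :=
    Finset.univ.filter (fun D => CrossingCircuit L D ∧ D.card = u) with hCircF
  have hset : {D : Finset (Pt F k) | CrossingCircuit L D ∧ D.card = u} = ↑CircF := by
    ext D; simp [hCircF]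
  rw [hset, Set.ncard_coe_finset]
  have himg : ∀ D ∈ CircF, D.image φ ∈ Finset.powersetCard u (Finset.univ : Finset (Fin m)) := by
    intro D hD
    rw [hCircF, Finset.mem_filter] at hD
    obtain ⟨-, ⟨hcirc, hline, hfil⟩, hcard⟩ := hD
    rw [Finset.mem_powersetCard]
    refine ⟨Finset.subset_univ _, ?_⟩
    rw [Finset.card_image_of_injOn, hcard]
    intro x hx y hy hxy
    have h1 : x ∈ D.filter (fun z => z.submodule ≤ L (φ x)) :=
      Finset.mem_filter.2 ⟨hx, hφ x (hline x hx)⟩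
    have h2 : y ∈ D.filter (fun z => z.submodule ≤ L (φ x)) :=
      Finset.mem_filter.2 ⟨hy, by rw [hxy]; exact hφ y (hline y hy)⟩
    exact Finset.card_le_one.1 (hfil (φ x)) _ h1 _ h2
  have hfib := Finset.card_eq_sum_card_fiberwise himg
  have hper : ∀ S ∈ Finset.powersetCard u (Finset.univ : Finset (Fin m)),
      (CircF.filter (fun D => D.image φ = S)).card * (q - 1) ≤ q ^ (2 * u - k) - 1 := by
    intro S hSmem
    rw [Finset.mem_powersetCard] at hSmem
    refine S12.perS (by omega) (by omega) hu0 P Q hgen L hL S hSmem.2 _ ?_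
    intro D hD
    rw [Finset.mem_filter, hCircF, Finset.mem_filter] at hD
    obtain ⟨⟨-, ⟨hcirc, hline, hfil⟩, hcard⟩, hDS⟩ := hD
    refine ⟨hcirc, hcard, hfil, ?_⟩
    intro x hx
    refine ⟨φ x, ?_, hφ x (hline x hx)⟩
    rw [← hDS]
    exact Finset.mem_image_of_mem φ hx
  -- put everything together
  have hN : (Finset.powersetCard u (Finset.univ : Finset (Fin m))).card = m.choose u := by
    rw [Finset.card_powersetCard, Finset.card_univ, Fintype.card_fin]
  have hstep1 : CircF.card * (q - 1) ≤ m.choose u * (q ^ (2 * u - k) - 1) := by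
    calc CircF.card * (q - 1)
        = (∑ S ∈ Finset.powersetCard u (Finset.univ : Finset (Fin m)),
            (CircF.filter (fun D => D.image φ = S)).card) * (q - 1) := by rw [← hfib]
      _ = ∑ S ∈ Finset.powersetCard u (Finset.univ : Finset (Fin m)),
            (CircF.filter (fun D => D.image φ = S)).card * (q - 1) := by
          rw [Finset.sum_mul]
      _ ≤ ∑ _S ∈ Finset.powersetCard u (Finset.univ : Finset (Fin m)),
            (q ^ (2 * u - k) - 1) := Finset.sum_le_sum hper
      _ = m.choose u * (q ^ (2 * u - k) - 1) := by
          rw [Finset.sum_const, hN, smul_eq_mul]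
  have hdk : 2 * u - k = (2 * u - k - 1) + 1 := by omega
  have hpow : q ^ (2 * u - k) - 1 ≤ (q - 1) * (q + 1) ^ (2 * u - k - 1) := by
    rw [hdk]
    exact S12.pow_ineq hq2 (2 * u - k - 1)
  have hstep2 : CircF.card * (q - 1) ≤ (m.choose u * (q + 1) ^ (2 * u - k - 1)) * (q - 1) := by
    calc CircF.card * (q - 1) ≤ m.choose u * (q ^ (2 * u - k) - 1) := hstep1
      _ ≤ m.choose u * ((q - 1) * (q + 1) ^ (2 * u - k - 1)) :=
          Nat.mul_le_mul_left _ hpow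
      _ = (m.choose u * (q + 1) ^ (2 * u - k - 1)) * (q - 1) := by ring
  exact Nat.le_of_mul_le_mul_right hstep2 (by omega)
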